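/- Let (A, •, ⟨ , ⟩) be a pseudo-Euclidean left Leibniz algebra with Levi-Civita products (⋆, ∘). Then the three curvature tensors K₁(u,v) := L⋆_{u•v} − [L⋆_u, L⋆_v], K₂(u,v) := −L∘_{u•v} + L⋆_u∘L∘_v + L∘_v∘L∘_u, K₃(u,v) := L∘_{u•v} − [L⋆_u, L∘_v] all vanish if and only if for all u,v ∈ A: L⋆_{u•v} = [L⋆_u, L⋆_v] and L⋆_u∘L⋆_v = −L⋆_u∘L∘_v = −L∘_u∘L⋆_v = L∘_u∘L∘_v. -/
import Mathlib


/-- Flatness (vanishing of the three curvature tensors) of a pseudo-Euclidean left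
Leibniz algebra is equivalent to the stated operator identities. -/
theorem flat_iff_operator_identities
    {K A : Type*} [Field K] [AddCommGroup A] [Module K A]
    (htwo : (2 : K) ≠ 0)
    (mul starP circP : A →ₗ[K] A →ₗ[K] A)
    (B : A →ₗ[K] A →ₗ[K] K)
    (hLL : ∀ u v w : A, mul u (mul v w) = mul (mul u v) w + mul v (mul u w))
    (hsymm : ∀ u v : A, B u v = B v u)
    (hnd : ∀ v : A, (∀ u : A, B u v = 0) → v = 0)
    (htor : ∀ u v : A, mul u v = starP u v + circP v u)
    (hcomp : ∀ u v w : A, B (starP u v) w = B v (circP u w)) :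
    ((∀ u v : A, starP (mul u v) = starP u ∘ₗ starP v - starP v ∘ₗ starP u) ∧
     (∀ u v : A, circP (mul u v) = starP u ∘ₗ circP v + circP v ∘ₗ circP u) ∧
     (∀ u v : A, circP (mul u v) = starP u ∘ₗ circP v - circP v ∘ₗ starP u)) ↔
    ((∀ u v : A, starP (mul u v) = starP u ∘ₗ starP v - starP v ∘ₗ starP u) ∧
     (∀ u v : A,
       starP u ∘ₗ starP v = -(starP u ∘ₗ circP v) ∧
       starP u ∘ₗ starP v = -(circP u ∘ₗ starP v) ∧
       starP u ∘ₗ starP v = circP u ∘ₗ circP v)) := by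
  -- nondegeneracy in pointwise form
  have hB : ∀ a b : A, (∀ w : A, B w a = B w b) → a = b := by
    intro a b h
    have := hnd (a - b) (fun w => by rw [map_sub, h w, sub_self])
    exact sub_eq_zero.1 this
  -- the other adjoint relation
  have hc2 : ∀ (a w x : A), B (circP a w) x = B w (starP a x) := by
    intro a w x
    rw [hsymm, ← hcomp, hsymm]
  constructor
  · rintro ⟨h1, h2, h3⟩
    have h1p : ∀ u v x : A, starP (mul u v) x = starP u (starP v x) - starP v (starP u x) := by
      intro u v x
      have := LinearMap.ext_iff.1 (h1 u v) x
      simpa using this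
    -- opA : circP v ∘ (circP u) = - circP v ∘ (starP u)
    have opA : ∀ u v x : A, circP v (circP u x) = -(circP v (starP u x)) := by
      intro u v x
      have h2x := LinearMap.ext_iff.1 (h2 u v) x
      have h3x := LinearMap.ext_iff.1 (h3 u v) x
      simp only [LinearMap.add_apply, LinearMap.sub_apply, LinearMap.comp_apply] at h2x h3x
      have h := h2x.symm.trans h3x
      rw [sub_eq_add_neg] at h
      exact add_left_cancel h
    -- opB : starP v ∘ (circP u) = - starP v ∘ (starP u), via the adjoint of K2 compared to K1
    have opB : ∀ u v x : A, starP v (circP u x) = -(starP v (starP u x)) := by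
      intro u v x
      have key : starP (mul u v) x = starP v (circP u x) + starP u (starP v x) := by
        apply hB
        intro w
        calc B w (starP (mul u v) x)
            = B (circP (mul u v) w) x := (hc2 (mul u v) w x).symm
          _ = B (starP u (circP v w)) x + B (circP v (circP u w)) x := by
              rw [h2 u v]; simp
          _ = B (circP v w) (circP u x) + B (circP u w) (starP v x) := by
              rw [hcomp u (circP v w) x, hc2 v (circP u w) x]
          _ = B w (starP v (circP u x)) + B w (starP u (starP v x)) := by
              rw [hc2 v w (circP u x), hc2 u w (starP v x)]
          _ = B w (starP v (circP u x) + starP u (starP v x)) := (map_add (B w) _ _).symm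
      have h := key.symm.trans (h1p u v x)
      have h' : starP v (circP u x) + starP u (starP v x)
          = -(starP v (starP u x)) + starP u (starP v x) := by rw [h]; abel
      exact add_right_cancel h'
    -- opC : circP u ∘ (starP v) = - starP u ∘ (starP v), the adjoint of opA
    have opC : ∀ u v x : A, circP u (starP v x) = -(starP u (starP v x)) := by
      intro u v x
      apply hB
      intro w
      have hAw : circP v (starP u w) = -(circP v (circP u w)) := by
        rw [opA u v w, neg_neg]
      calc B w (circP u (starP v x))
          = B (starP u w) (starP v x) := (hcomp u w (starP v x)).symm
        _ = B (circP v (starP u w)) x := (hc2 v (starP u w) x).symm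
        _ = B (-(circP v (circP u w))) x := by rw [hAw]
        _ = -(B (circP v (circP u w)) x) := by simp
        _ = -(B (circP u w) (starP v x)) := by rw [hc2 v (circP u w) x]
        _ = -(B w (starP u (starP v x))) := by rw [hc2 u w (starP v x)]
        _ = B w (-(starP u (starP v x))) := by simp
    refine ⟨h1, fun u v => ⟨?_, ?_, ?_⟩⟩
    · ext x
      simp only [LinearMap.comp_apply, LinearMap.neg_apply]
      rw [opB v u x, neg_neg]
    · ext x
      simp only [LinearMap.comp_apply, LinearMap.neg_apply]
      rw [opC u v x, neg_neg]
    · ext x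
      simp only [LinearMap.comp_apply]
      rw [opA v u x, opC u v x, neg_neg]
  · rintro ⟨h1, h4⟩
    have h1p : ∀ u v x : A, starP (mul u v) x = starP u (starP v x) - starP v (starP u x) := by
      intro u v x
      have := LinearMap.ext_iff.1 (h1 u v) x
      simpa using this
    have e1 : ∀ u v x : A, starP u (circP v x) = -(starP u (starP v x)) := by
      intro u v x
      have hx := LinearMap.ext_iff.1 (h4 u v).1 x
      simp only [LinearMap.comp_apply, LinearMap.neg_apply] at hx
      rw [hx, neg_neg]
    have e2 : ∀ u v x : A, circP u (starP v x) = -(starP u (starP v x)) := by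
      intro u v x
      have hx := LinearMap.ext_iff.1 (h4 u v).2.1 x
      simp only [LinearMap.comp_apply, LinearMap.neg_apply] at hx
      rw [hx, neg_neg]
    have e3 : ∀ u v x : A, starP u (starP v x) = circP u (circP v x) := by
      intro u v x
      have hx := LinearMap.ext_iff.1 (h4 u v).2.2 x
      simpa using hx
    -- key : circP (mul u v) = - starP (mul u v)
    have key : ∀ u v x : A, circP (mul u v) x = -(starP (mul u v) x) := by
      intro u v x
      apply hB
      intro w
      calc B w (circP (mul u v) x)
          = B (starP (mul u v) w) x := (hcomp (mul u v) w x).symm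
        _ = B (starP u (starP v w) - starP v (starP u w)) x := by rw [h1p u v w]
        _ = B (starP u (starP v w)) x - B (starP v (starP u w)) x := by simp
        _ = B (starP v w) (circP u x) - B (starP u w) (circP v x) := by
            rw [hcomp u (starP v w) x, hcomp v (starP u w) x]
        _ = B w (circP v (circP u x)) - B w (circP u (circP v x)) := by
            rw [hcomp v w (circP u x), hcomp u w (circP v x)]
        _ = B w (starP v (starP u x)) - B w (starP u (starP v x)) := by
            rw [← e3 v u x, ← e3 u v x]
        _ = B w (-(starP (mul u v) x)) := by
            rw [h1p u v x]; simp [neg_sub, map_sub]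
    refine ⟨h1, ?_, ?_⟩
    · intro u v
      ext x
      simp only [LinearMap.add_apply, LinearMap.comp_apply]
      rw [key u v x, h1p u v x, e1 u v x, ← e3 v u x]
      abel
    · intro u v
      ext x
      simp only [LinearMap.sub_apply, LinearMap.comp_apply]
      rw [key u v x, h1p u v x, e1 u v x, e2 v u x]
      abel
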